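/- arXiv:2404.02664 — 4 statements merged into one kernel-verified Lean document; each statement's English description precedes it below -/
import Mathlib

section
/- Let w ∈ ℝ and let f be a complex function analytic on the closed upper half plane {z : Im z ≥ 0} such that sup_{t ∈ [0,π]} |f(w + R·e^{it})| → 0 as R → ∞. Then the principal value integral ∫_{-∞}^{∞} f(x)/(x − w) dx exists and equals iπ·f(w). -/
open Complex intervalIntegral Filter Topology

private lemma ftc_inv (a b : ℝ) (c d : ℂ) (hd : d ≠ 0) (p : ℝ → ℂ)
    (hp : ∀ y : ℝ, p y = ↑y * d + c)
    (h : ∀ y ∈ Set.uIcc a b, p y ∈ Complex.slitPlane) :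
    ∫ y in a..b, (p y)⁻¹ = d⁻¹ * (Complex.log (p b) - Complex.log (p a)) := by
  have hcont : ContinuousOn (fun y : ℝ => (p y)⁻¹) (Set.uIcc a b) := by
    have hpc : Continuous p := by
      have hfe : p = fun y : ℝ => ↑y * d + c := funext hp
      rw [hfe]; fun_prop
    exact hpc.continuousOn.inv₀ fun y hy => Complex.slitPlane_ne_zero (h y hy)
  have key := intervalIntegral.integral_eq_sub_of_hasDerivAt
      (f := fun y : ℝ => d⁻¹ * Complex.log (p y)) (f' := fun y => (p y)⁻¹) ?_
      (hcont.intervalIntegrable)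
  · rw [key]; ring
  · intro y hy
    have h2 : HasDerivAt (fun z : ℂ => d⁻¹ * Complex.log (z * d + c)) ((p y)⁻¹) ↑y := by
      have hinner : HasDerivAt (fun z : ℂ => z * d + c) d ↑y := by
        simpa using ((hasDerivAt_id (↑y : ℂ)).mul_const d).add_const c
      have hmem : ((y : ℂ) * d + c) ∈ Complex.slitPlane := by rw [← hp]; exact h y hy
      have h3 := ((Complex.hasDerivAt_log hmem).comp (↑y : ℂ) hinner).const_mul d⁻¹
      refine h3.congr_deriv ?_
      rw [hp]; field_simp
    have h5 := h2.comp_ofReal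
    simpa only [← hp] using h5

private lemma abs_le_sup (w : ℝ) (f : ℂ → ℂ) (U : Set ℂ) (hsub : {z : ℂ | 0 ≤ z.im} ⊆ U)
    (hf : ContinuousOn f U) (z : ℂ) (hz : 0 ≤ z.im) :
    ‖f z‖ ≤ ⨆ t ∈ Set.Icc (0:ℝ) Real.pi,
      ‖f (↑w + ↑(‖z - ↑w‖) * Complex.exp (I * ↑t))‖ := by
  set ρ : ℝ := ‖z - ↑w‖ with hρ
  have hρ0 : 0 ≤ ρ := norm_nonneg _
  set F : ℝ → ℝ := fun t => ‖f (↑w + ↑ρ * Complex.exp (I * ↑t))‖ with hF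
  have hmaps : ∀ t ∈ Set.Icc (0:ℝ) Real.pi, (↑w + ↑ρ * Complex.exp (I * ↑t)) ∈ U := by
    intro t ht
    apply hsub
    have him : (↑w + ↑ρ * Complex.exp (I * ↑t)).im = ρ * Real.sin t := by
      rw [mul_comm I (↑t : ℂ)]
      simp [Complex.add_im, Complex.mul_im, Complex.exp_ofReal_mul_I_im,
        Complex.exp_ofReal_mul_I_re]
    simp only [Set.mem_setOf_eq, him]
    exact mul_nonneg hρ0 (Real.sin_nonneg_of_nonneg_of_le_pi ht.1 ht.2)
  have hcont : ContinuousOn F (Set.Icc (0:ℝ) Real.pi) := by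
    apply continuous_norm.comp_continuousOn
    exact hf.comp (by fun_prop) hmaps
  have hbdd : BddAbove (F '' Set.Icc (0:ℝ) Real.pi) :=
    isCompact_Icc.bddAbove_image hcont
  have ht0 : Complex.arg (z - ↑w) ∈ Set.Icc (0:ℝ) Real.pi := by
    constructor
    · rw [Complex.arg_nonneg_iff]
      simp [Complex.sub_im, hz]
    · exact Complex.arg_le_pi _
  have hrepr : ↑w + ↑ρ * Complex.exp (I * ↑(Complex.arg (z - ↑w))) = z := by
    rw [mul_comm I]
    rw [hρ, Complex.norm_mul_exp_arg_mul_I (z - ↑w)]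
    ring
  have hne : (Set.Icc (0:ℝ) Real.pi).Nonempty := ⟨0, le_refl 0, Real.pi_pos.le⟩
  have hrange : BddAbove (Set.range fun i : (Set.Icc (0:ℝ) Real.pi) => F i) := by
    rw [← Set.image_eq_range]; exact hbdd
  have h0le : sSup (∅ : Set ℝ) ≤ ⨆ i : (Set.Icc (0:ℝ) Real.pi), F i := by
    rw [Real.sSup_empty]
    exact le_trans (norm_nonneg _) (le_ciSup_set hbdd hne.some_mem)
  calc ‖f z‖ = F (Complex.arg (z - ↑w)) := by rw [hF]; simp only [hrepr]
    _ ≤ ⨆ i : (Set.Icc (0:ℝ) Real.pi), F i := le_ciSup_set hbdd ht0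
    _ = ⨆ t ∈ Set.Icc (0:ℝ) Real.pi, F t := ciSup_subtype'' hrange h0le

theorem pv_integral_upper_half_plane
    (w : ℝ) (f : ℂ → ℂ) (U : Set ℂ) (hU : IsOpen U)
    (hsub : {z : ℂ | 0 ≤ z.im} ⊆ U) (hf : DifferentiableOn ℂ f U)
    (hdecay :
      Tendsto (fun R : ℝ => ⨆ t ∈ Set.Icc (0:ℝ) Real.pi,
          ‖f (w + R * Complex.exp (I * t))‖) atTop (𝓝 0)) :
    Tendsto
      (fun p : ℝ × ℝ =>
        (∫ x in (w - p.1)..(w - p.2), f x / (x - w)) +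
          ∫ x in (w + p.2)..(w + p.1), f x / (x - w))
      (atTop ×ˢ 𝓝[>] 0) (𝓝 (I * Real.pi * f w)) := by
  have hwU : (w : ℂ) ∈ U := hsub (by simp)
  set g : ℂ → ℂ := dslope f ↑w with hgdef
  have hg : DifferentiableOn ℂ g U :=
    (Complex.differentiableOn_dslope (hU.mem_nhds hwU)).mpr hf
  have hgc : ∀ z : ℂ, 0 ≤ z.im → ContinuousAt g z := fun z hz =>
    ((hg z (hsub hz)).differentiableAt (hU.mem_nhds (hsub hz))).continuousAt
  have hgR : Continuous fun x : ℝ => g ↑x := by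
    rw [continuous_iff_continuousAt]; intro x
    exact (hgc ↑x (by simp)).comp Complex.continuous_ofReal.continuousAt
  have hgint : ∀ a b : ℝ, IntervalIntegrable (fun x : ℝ => g ↑x) MeasureTheory.volume a b :=
    fun a b => hgR.intervalIntegrable a b
  -- generic splitting of ∫ g along a curve avoiding w
  have hsplitC : ∀ (a b : ℝ) (γ : ℝ → ℂ), Continuous γ →
      (∀ t ∈ Set.uIcc a b, 0 ≤ (γ t).im) → (∀ t ∈ Set.uIcc a b, γ t ≠ ↑w) →
      (∫ t in a..b, g (γ t)) =
        (∫ t in a..b, f (γ t) * (γ t - ↑w)⁻¹) - f ↑w * ∫ t in a..b, (γ t - ↑w)⁻¹ := by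
    intro a b γ hγ him hne
    have hqc : ContinuousOn (fun t => (γ t - ↑w)⁻¹) (Set.uIcc a b) :=
      ((hγ.sub continuous_const).continuousOn).inv₀ fun t ht => sub_ne_zero.2 (hne t ht)
    have hfc : ContinuousOn (fun t => f (γ t)) (Set.uIcc a b) :=
      hf.continuousOn.comp hγ.continuousOn fun t ht => hsub (him t ht)
    have h1 : (∫ t in a..b, g (γ t)) =
        ∫ t in a..b, (f (γ t) * (γ t - ↑w)⁻¹ - f ↑w * (γ t - ↑w)⁻¹) := by
      apply intervalIntegral.integral_congr; intro t ht
      have h0 : γ t - ↑w ≠ 0 := sub_ne_zero.2 (hne t ht)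
      show dslope f ↑w (γ t) = f (γ t) * (γ t - ↑w)⁻¹ - f ↑w * (γ t - ↑w)⁻¹
      rw [dslope_of_ne f (hne t ht), slope_def_field]
      field_simp
    rw [h1, intervalIntegral.integral_sub (f := fun t => f (γ t) * (γ t - ↑w)⁻¹) ((hfc.mul hqc).intervalIntegrable)
      ((hqc.intervalIntegrable).const_mul _), intervalIntegral.integral_const_mul]
  set h : ℝ → ℂ := fun R => ∫ x in (w - R)..(w + R), g ↑x with hhdef
  -- Step II : limit of h at infinity
  have hII : Tendsto h atTop (𝓝 (I * Real.pi * f ↑w)) := by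
    rw [Metric.tendsto_atTop]
    intro ε hε
    have hε'pos : 0 < ε / 5 := by positivity
    have hev : ∀ᶠ ρ : ℝ in atTop, (⨆ t ∈ Set.Icc (0:ℝ) Real.pi,
        ‖f (↑w + ↑ρ * Complex.exp (I * ↑t))‖) ≤ ε / 5 :=
      hdecay.eventually (eventually_le_nhds hε'pos)
    obtain ⟨R₀, hR₀⟩ := Filter.eventually_atTop.1 hev
    refine ⟨max R₀ 1, fun R hR => ?_⟩
    have hR1 : (1:ℝ) ≤ R := le_trans (le_max_right _ _) hR
    have hRpos : (0:ℝ) < R := lt_of_lt_of_le zero_lt_one hR1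
    have hRne : R ≠ 0 := ne_of_gt hRpos
    have hR0le : R₀ ≤ R := le_trans (le_max_left _ _) hR
    -- the rectangle contour identity
    have hrect : (∫ x in (w-R)..(w+R), g ↑x) - (∫ x in (w-R)..(w+R), g (↑x + ↑R*I)) +
        I*(∫ y in (0:ℝ)..R, g (↑(w+R) + ↑y*I)) - I*(∫ y in (0:ℝ)..R, g (↑(w-R) + ↑y*I)) = 0 := by
      have key := Complex.integral_boundary_rect_eq_zero_of_differentiableOn g
          (↑(w-R)) (↑(w+R) + ↑R*I) ?_
      · simpa [smul_eq_mul] using key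
      · apply hg.mono
        intro z hz
        simp only [Complex.mem_reProdIm] at hz
        apply hsub
        have := hz.2
        rw [Set.uIcc_of_le (by simpa [Complex.add_im, Complex.ofReal_im] using hRpos.le)] at this
        simpa using le_trans (by simpa using this.1) (le_refl z.im)
    -- splitting the three integrals
    have hT := hsplitC (w-R) (w+R) (fun x : ℝ => ↑x + ↑R*I) (by fun_prop)
      (fun t _ => by simp [hRpos.le]) (fun t _ => by
        apply ne_of_apply_ne Complex.im
        simp [hRne])
    have hS2 := hsplitC 0 R (fun y : ℝ => ↑(w+R) + ↑y*I) (by fun_prop)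
      (fun t ht => by
        rw [Set.uIcc_of_le hRpos.le] at ht
        simpa using ht.1)
      (fun t _ => by
        apply ne_of_apply_ne Complex.re
        simp [hRne])
    have hS3 := hsplitC 0 R (fun y : ℝ => ↑(w-R) + ↑y*I) (by fun_prop)
      (fun t ht => by
        rw [Set.uIcc_of_le hRpos.le] at ht
        simpa using ht.1)
      (fun t _ => by
        apply ne_of_apply_ne Complex.re
        simp [hRne])
    -- FTC values of the reciprocal integrals
    have hQT : (∫ x in (w-R)..(w+R), ((x:ℂ) + ↑R*I - ↑w)⁻¹) =
        Complex.log (↑R + ↑R*I) - Complex.log (-↑R + ↑R*I) := by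
      have key := ftc_inv (w-R) (w+R) (↑R*I - ↑w) 1 one_ne_zero
        (fun x : ℝ => ↑x + ↑R*I - ↑w) (fun y => by ring) ?_
      · rw [key, inv_one, one_mul]
        congr 2 <;> push_cast <;> ring
      · intro y _
        rw [Complex.mem_slitPlane_iff]
        right
        simp [hRne]
    have hQ2 : (∫ y in (0:ℝ)..R, (↑(w+R) + ↑y*I - ↑w)⁻¹) =
        -I * (Complex.log (↑R + ↑R*I) - Complex.log ↑R) := by
      have key := ftc_inv 0 R (↑(w+R) - ↑w) I I_ne_zero
        (fun y : ℝ => ↑(w+R) + ↑y*I - ↑w) (fun y => by ring) ?_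
      · rw [key, Complex.inv_I]
        congr 3 <;> push_cast <;> ring
      · intro y _
        rw [Complex.mem_slitPlane_iff]
        left
        simp [hRpos]
    have hQ3 : (∫ y in (0:ℝ)..R, (↑(w-R) + ↑y*I - ↑w)⁻¹) =
        -(I * (Complex.log (↑R - ↑R*I) - Complex.log ↑R)) := by
      have h1 : (∫ y in (0:ℝ)..R, (↑(w-R) + ↑y*I - ↑w)⁻¹) =
          -∫ y in (0:ℝ)..R, ((y:ℂ) * (-I) + (↑w - ↑(w-R)))⁻¹ := by
        rw [← intervalIntegral.integral_neg]
        apply intervalIntegral.integral_congr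
        intro y _
        show ((w-R : ℝ) + (y:ℂ)*I - (w:ℝ) : ℂ)⁻¹ = -(((y:ℂ) * (-I) + ((w:ℝ) - ((w-R : ℝ):ℂ)))⁻¹)
        rw [← inv_neg]
        congr 1
        ring
      rw [h1]
      have key := ftc_inv 0 R (↑w - ↑(w-R)) (-I) (by simp [I_ne_zero])
        (fun y : ℝ => (y:ℂ) * (-I) + (↑w - ↑(w-R))) (fun y => by ring) ?_
      · rw [key]
        have : (-I : ℂ)⁻¹ = I := by rw [inv_neg, Complex.inv_I, neg_neg]
        rw [this]
        congr 4 <;> push_cast <;> ring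
      · intro y _
        rw [Complex.mem_slitPlane_iff]
        left
        simp [hRpos]
    -- value of the log combination
    have hD : Complex.log (↑R - ↑R*I) - Complex.log (-↑R + ↑R*I) = -↑Real.pi * I := by
      have hx : (-↑R + ↑R*I : ℂ) = -(↑R - ↑R*I) := by ring
      have him : (↑R - ↑R*I : ℂ).im < 0 := by simp [hRpos]
      rw [hx]
      simp only [Complex.log, map_neg_eq_map, norm_neg, Complex.arg_neg_eq_arg_add_pi_of_im_neg him]
      push_cast
      ring
    rw [hQT] at hT
    rw [hQ2] at hS2
    rw [hQ3] at hS3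
    -- the main identity
    have hmain : h R - I*↑Real.pi*f ↑w =
        (∫ x in (w-R)..(w+R), f (↑x + ↑R*I) * (↑x + ↑R*I - ↑w)⁻¹)
          - I*(∫ y in (0:ℝ)..R, f (↑(w+R) + ↑y*I) * (↑(w+R) + ↑y*I - ↑w)⁻¹)
          + I*(∫ y in (0:ℝ)..R, f (↑(w-R) + ↑y*I) * (↑(w-R) + ↑y*I - ↑w)⁻¹) := by
      simp only [hhdef]
      linear_combination hrect + hT - I*hS2 + I*hS3 - (f ↑w)*hD
        - (f ↑w * (Complex.log (↑R + ↑R*I) - Complex.log (↑R - ↑R*I)))*Complex.I_mul_I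
    -- norm bounds
    have hbound : ∀ (z : ℂ), 0 ≤ z.im → R ≤ ‖z - ↑w‖ →
        ‖f z * (z - ↑w)⁻¹‖ ≤ ε/5 / R := by
      intro z hz hRz
      have h2 : ‖f z‖ ≤ ε/5 :=
        le_trans (abs_le_sup w f U hsub hf.continuousOn z hz)
          (hR₀ _ (le_trans hR0le hRz))
      rw [norm_mul, norm_inv, div_eq_mul_inv]
      have habspos : 0 < ‖z - ↑w‖ := lt_of_lt_of_le hRpos hRz
      gcongr
    have hb1 : ‖∫ x in (w-R)..(w+R), f (↑x + ↑R*I) * (↑x + ↑R*I - ↑w)⁻¹‖ ≤ 2*(ε/5) := by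
      have := intervalIntegral.norm_integral_le_of_norm_le_const
        (C := ε/5 / R) (a := w-R) (b := w+R)
        (f := fun x : ℝ => f (↑x + ↑R*I) * (↑x + ↑R*I - ↑w)⁻¹) ?_
      · calc ‖∫ x in (w-R)..(w+R), f (↑x + ↑R*I) * (↑x + ↑R*I - ↑w)⁻¹‖
            ≤ ε/5 / R * |w+R - (w-R)| := this
          _ = 2*(ε/5) := by
              rw [show w+R - (w-R) = 2*R by ring, abs_of_pos (by linarith)]
              field_simp
      · intro x _
        apply hbound
        · simpa using hRpos.le
        · have : ((x:ℂ) + ↑R*I - ↑w).im = R := by simp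
          calc R = |((x:ℂ) + ↑R*I - ↑w).im| := by rw [this, abs_of_pos hRpos]
            _ ≤ _ := Complex.abs_im_le_norm _
    have hb2 : ‖∫ y in (0:ℝ)..R, f (↑(w+R) + ↑y*I) * (↑(w+R) + ↑y*I - ↑w)⁻¹‖ ≤ ε/5 := by
      have := intervalIntegral.norm_integral_le_of_norm_le_const
        (C := ε/5 / R) (a := (0:ℝ)) (b := R)
        (f := fun y : ℝ => f (↑(w+R) + ↑y*I) * (↑(w+R) + ↑y*I - ↑w)⁻¹) ?_
      · calc ‖∫ y in (0:ℝ)..R, f (↑(w+R) + ↑y*I) * (↑(w+R) + ↑y*I - ↑w)⁻¹‖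
            ≤ ε/5 / R * |R - 0| := this
          _ = ε/5 := by rw [sub_zero, abs_of_pos hRpos]; field_simp
      · intro y hy
        rw [Set.uIoc_of_le hRpos.le] at hy
        apply hbound
        · simpa using hy.1.le
        · have : ((↑(w+R) : ℂ) + ↑y*I - ↑w).re = R := by simp
          calc R = |((↑(w+R) : ℂ) + ↑y*I - ↑w).re| := by rw [this, abs_of_pos hRpos]
            _ ≤ _ := Complex.abs_re_le_norm _
    have hb3 : ‖∫ y in (0:ℝ)..R, f (↑(w-R) + ↑y*I) * (↑(w-R) + ↑y*I - ↑w)⁻¹‖ ≤ ε/5 := by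
      have := intervalIntegral.norm_integral_le_of_norm_le_const
        (C := ε/5 / R) (a := (0:ℝ)) (b := R)
        (f := fun y : ℝ => f (↑(w-R) + ↑y*I) * (↑(w-R) + ↑y*I - ↑w)⁻¹) ?_
      · calc ‖∫ y in (0:ℝ)..R, f (↑(w-R) + ↑y*I) * (↑(w-R) + ↑y*I - ↑w)⁻¹‖
            ≤ ε/5 / R * |R - 0| := this
          _ = ε/5 := by rw [sub_zero, abs_of_pos hRpos]; field_simp
      · intro y hy
        rw [Set.uIoc_of_le hRpos.le] at hy
        apply hbound
        · simpa using hy.1.le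
        · have : ((↑(w-R) : ℂ) + ↑y*I - ↑w).re = -R := by simp
          calc R = |((↑(w-R) : ℂ) + ↑y*I - ↑w).re| := by
                rw [this, abs_neg, abs_of_pos hRpos]
            _ ≤ _ := Complex.abs_re_le_norm _
    rw [dist_eq_norm, hmain]
    have hnormI : ∀ z : ℂ, ‖I * z‖ = ‖z‖ := by
      intro z; rw [norm_mul, Complex.norm_I, one_mul]
    have final : ∀ A B C : ℂ, ‖A‖ ≤ 2*(ε/5) → ‖B‖ ≤ ε/5 → ‖C‖ ≤ ε/5 →
        ‖A - I*B + I*C‖ < ε := by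
      intro A B C hA hB hC
      calc ‖A - I*B + I*C‖ ≤ ‖A - I*B‖ + ‖I*C‖ := norm_add_le _ _
        _ ≤ ‖A‖ + ‖I*B‖ + ‖I*C‖ := add_le_add_left (norm_sub_le _ _) _
        _ = ‖A‖ + ‖B‖ + ‖C‖ := by rw [hnormI, hnormI]
        _ ≤ 2*(ε/5) + ε/5 + ε/5 := add_le_add (add_le_add hA hB) hC
        _ < ε := by linarith
    exact final _ _ _ hb1 hb2 hb3
  -- Step III : limit of h at 0⁺
  have hIII : Tendsto h (𝓝[>] (0:ℝ)) (𝓝 0) := by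
    obtain ⟨C, hC⟩ := (isCompact_Icc (a := w-1) (b := w+1)).exists_bound_of_continuousOn
      hgR.continuousOn
    apply squeeze_zero_norm' (a := fun r : ℝ => (max C 0) * (2*r))
    · filter_upwards [Ioc_mem_nhdsGT_of_mem (Set.mem_Ico.2 ⟨le_refl (0:ℝ), zero_lt_one⟩)]
        with r hr
      have hr0 : 0 < r := hr.1
      have hr1 : r ≤ 1 := hr.2
      calc ‖h r‖ ≤ max C 0 * |w+r - (w-r)| := by
            apply intervalIntegral.norm_integral_le_of_norm_le_const
            intro x hx
            rw [Set.uIoc_of_le (by linarith)] at hx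
            exact le_trans (hC x ⟨by linarith [hx.1], by linarith [hx.2]⟩) (le_max_left _ _)
        _ = max C 0 * (2*r) := by
            rw [show w+r - (w-r) = 2*r by ring, abs_of_pos (by linarith)]
    · have htd : Tendsto (fun r : ℝ => (max C 0) * (2*r)) (𝓝 0) (𝓝 0) := by
        have := (continuous_const.mul ((continuous_const.mul continuous_id)) :
          Continuous fun r : ℝ => (max C 0) * (2*r)).tendsto (0:ℝ)
        simpa only [mul_zero] using
          (show Tendsto (fun r : ℝ => (max C 0) * (2*r)) (𝓝 0) (𝓝 ((max C 0) * (2*0))) from this)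
      exact htd.mono_left nhdsWithin_le_nhds
  -- Step I : eventual equality
  have hkey : ∀ p : ℝ × ℝ, 0 < p.2 → p.2 < p.1 →
      (∫ x in (w - p.1)..(w - p.2), f ↑x / (↑x - ↑w)) +
        (∫ x in (w + p.2)..(w + p.1), f ↑x / (↑x - ↑w)) = h p.1 - h p.2 := by
    rintro ⟨R, r⟩ hr hrR
    simp only at hr hrR ⊢
    have hrpos : (0:ℝ) < r := hr
    have hRpos : (0:ℝ) < R := lt_trans hr hrR
    -- rewrite both integrands
    have hsplit1 := hsplitC (w-R) (w-r) (fun x : ℝ => (x:ℂ)) Complex.continuous_ofReal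
      (fun t _ => by simp) (fun t ht => by
        rw [Set.uIcc_of_le (by linarith)] at ht
        show (t:ℂ) ≠ (w:ℂ)
        exact_mod_cast ne_of_lt (by linarith [ht.2] : t < w))
    have hsplit2 := hsplitC (w+r) (w+R) (fun x : ℝ => (x:ℂ)) Complex.continuous_ofReal
      (fun t _ => by simp) (fun t ht => by
        rw [Set.uIcc_of_le (by linarith)] at ht
        show (t:ℂ) ≠ (w:ℂ)
        exact_mod_cast ne_of_gt (by linarith [ht.1] : w < t))
    -- values of the reciprocal integrals
    have hQ1 : (∫ x in (w-R)..(w-r), ((x:ℂ) - ↑w)⁻¹) = ((Real.log (r/R) : ℝ) : ℂ) := by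
      rw [show (fun x : ℝ => ((x:ℂ) - ↑w)⁻¹) = fun x : ℝ => (((x - w)⁻¹ : ℝ) : ℂ) by
        funext x; push_cast; ring]
      rw [intervalIntegral.integral_ofReal]
      norm_cast
      rw [intervalIntegral.integral_comp_sub_right (fun x : ℝ => x⁻¹) w]
      rw [show w - R - w = -R by ring, show w - r - w = -r by ring]
      rw [integral_inv (by
        rw [Set.uIcc_of_le (by linarith)]
        intro hmem
        exact absurd hmem.2 (by linarith))]
      rw [neg_div_neg_eq]
    have hQ2 : (∫ x in (w+r)..(w+R), ((x:ℂ) - ↑w)⁻¹) = ((Real.log (R/r) : ℝ) : ℂ) := by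
      rw [show (fun x : ℝ => ((x:ℂ) - ↑w)⁻¹) = fun x : ℝ => (((x - w)⁻¹ : ℝ) : ℂ) by
        funext x; push_cast; ring]
      rw [intervalIntegral.integral_ofReal]
      norm_cast
      rw [intervalIntegral.integral_comp_sub_right (fun x : ℝ => x⁻¹) w]
      rw [show w + r - w = r by ring, show w + R - w = R by ring]
      rw [integral_inv (by
        rw [Set.uIcc_of_le (by linarith)]
        intro hmem
        exact absurd hmem.1 (by linarith))]
    have hlog : ((Real.log (r/R) : ℝ) : ℂ) + ((Real.log (R/r) : ℝ) : ℂ) = 0 := by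
      rw [← Complex.ofReal_add, ← Real.log_mul (by positivity) (by positivity)]
      rw [show r/R * (R/r) = 1 by field_simp]
      simp
    -- adjacency
    have e1 := intervalIntegral.integral_add_adjacent_intervals
      (hgint (w-R) (w-r)) (hgint (w-r) (w+r))
    have e2 := intervalIntegral.integral_add_adjacent_intervals
      (hgint (w-R) (w+r)) (hgint (w+r) (w+R))
    simp only [hhdef, div_eq_mul_inv]
    linear_combination -hsplit1 - hsplit2 + e1 + e2 + (f ↑w)*hQ1 + (f ↑w)*hQ2 + (f ↑w)*hlog
  -- combine
  have H := (hII.comp (tendsto_fst : Tendsto Prod.fst (atTop ×ˢ 𝓝[>] (0:ℝ)) atTop)).sub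
    (hIII.comp (tendsto_snd : Tendsto Prod.snd (atTop ×ˢ 𝓝[>] (0:ℝ)) (𝓝[>] (0:ℝ))))
  rw [sub_zero] at H
  apply Filter.Tendsto.congr' _ H
  have hmem := Filter.prod_mem_prod (Ici_mem_atTop (1:ℝ))
    (Ioo_mem_nhdsGT_of_mem (Set.mem_Ico.2 ⟨le_refl (0:ℝ), zero_lt_one⟩))
  apply Filter.eventually_of_mem hmem
  intro p hp
  exact (hkey p hp.2.1 (lt_of_lt_of_le hp.2.2 hp.1)).symm
end

section
/- Let w ∈ ℝ and let f be a complex function analytic on the closed lower half plane {z : Im z ≤ 0} such that sup_{t ∈ [0,π]} |f(w + R·e^{−it})| → 0 as R → ∞. Then the principal value integral ∫_{-∞}^{∞} f(x)/(x − w) dx exists and equals −iπ·f(w). -/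
open Complex intervalIntegral Filter Topology MeasureTheory Set

lemma pv_fubini {a b c d : ℝ} (hab : a ≤ b) (hcd : c ≤ d) (g : ℝ → ℝ → ℂ)
    (hg : ContinuousOn (fun p : ℝ × ℝ => g p.1 p.2) (Icc a b ×ˢ Icc c d)) :
    ∫ x in a..b, ∫ y in c..d, g x y = ∫ y in c..d, ∫ x in a..b, g x y := by
  rw [intervalIntegral.integral_of_le hab, intervalIntegral.integral_of_le hcd]
  simp_rw [intervalIntegral.integral_of_le hab, intervalIntegral.integral_of_le hcd]
  apply MeasureTheory.integral_integral_swap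
  rw [Measure.prod_restrict]
  apply (hg.integrableOn_compact (isCompact_Icc.prod isCompact_Icc)).mono_set
  exact Set.prod_mono Ioc_subset_Icc_self Ioc_subset_Icc_self

lemma pv_mem (w ρ t : ℝ) (hρ : 0 ≤ ρ) (ht : t ∈ Icc (0:ℝ) Real.pi) :
    ((w:ℂ) + ρ * Complex.exp (-I * t)).im ≤ 0 := by
  have h : ((w:ℂ) + ρ * Complex.exp (-I * t)).im = ρ * (-Real.sin t) := by
    simp [Complex.exp_im, Complex.exp_re]
  rw [h]
  have := Real.sin_nonneg_of_nonneg_of_le_pi ht.1 ht.2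
  nlinarith

lemma pv_key (w : ℝ) (f : ℂ → ℂ) (U : Set ℂ) (hU : IsOpen U)
    (hsub : {z : ℂ | z.im ≤ 0} ⊆ U) (hf : DifferentiableOn ℂ f U)
    {r R : ℝ} (hr : 0 < r) (hrR : r ≤ R) :
    (∫ x in (w - R)..(w - r), f x / (x - w)) + ∫ x in (w + r)..(w + R), f x / (x - w)
      = (-I * ∫ t in (0:ℝ)..Real.pi, f ((w:ℂ) + r * Complex.exp (-I * t)))
        - (-I * ∫ t in (0:ℝ)..Real.pi, f ((w:ℂ) + R * Complex.exp (-I * t))) := by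
  have hπ : (0:ℝ) ≤ Real.pi := Real.pi_nonneg
  have hR0 : (0:ℝ) ≤ R := hr.le.trans hrR
  have hcont : ContinuousOn f U := hf.continuousOn
  have hFcont : ContinuousOn (deriv f) U :=
    ((hf.analyticOnNhd hU).deriv).differentiableOn.continuousOn
  have hmem : ∀ ρ t : ℝ, 0 ≤ ρ → t ∈ Icc (0:ℝ) Real.pi →
      ((w:ℂ) + ρ * Complex.exp (-I * t)) ∈ U := fun ρ t hρ ht => hsub (pv_mem w ρ t hρ ht)
  have hmemR : ∀ x : ℝ, ((x:ℂ)) ∈ U := fun x => hsub (by simp)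
  have hd : ∀ z ∈ U, HasDerivAt f (deriv f z) z := fun z hz =>
    (hf.differentiableAt (hU.mem_nhds hz)).hasDerivAt
  -- pointwise derivatives
  have hder_ρ : ∀ (t ρ : ℝ), 0 ≤ ρ → t ∈ Icc (0:ℝ) Real.pi →
      HasDerivAt (fun ρ : ℝ => f ((w:ℂ) + ρ * Complex.exp (-I * t)))
        (Complex.exp (-I * t) * deriv f ((w:ℂ) + ρ * Complex.exp (-I * t))) ρ := by
    intro t ρ hρ ht
    have h1 : HasDerivAt (fun ρ : ℝ => (w:ℂ) + ρ * Complex.exp (-I * t))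
        (Complex.exp (-I * t)) ρ := by
      simpa using
        (((hasDerivAt_id ρ).ofReal_comp).mul_const (Complex.exp (-I * t))).const_add (w:ℂ)
    have h2 := (hd _ (hmem ρ t hρ ht)).comp ρ h1
    rw [mul_comm (deriv f _)] at h2
    exact h2
  have hder_t : ∀ (ρ t : ℝ), 0 < ρ → t ∈ Icc (0:ℝ) Real.pi →
      HasDerivAt (fun t : ℝ => (I / ρ) * f ((w:ℂ) + ρ * Complex.exp (-I * t)))
        (Complex.exp (-I * t) * deriv f ((w:ℂ) + ρ * Complex.exp (-I * t))) t := by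
    intro ρ t hρ ht
    have h0 : HasDerivAt (fun t : ℝ => -I * (t:ℂ)) (-I) t := by
      simpa using ((hasDerivAt_id t).ofReal_comp).const_mul (-I)
    have h1 : HasDerivAt (fun t : ℝ => (w:ℂ) + ρ * Complex.exp (-I * t))
        (ρ * (Complex.exp (-I * t) * (-I))) t :=
      ((h0.cexp).const_mul (ρ:ℂ)).const_add (w:ℂ)
    have h2 := ((hd _ (hmem ρ t hρ.le ht)).comp t h1).const_mul (I / (ρ:ℂ))
    have hρ' : (ρ:ℂ) ≠ 0 := Complex.ofReal_ne_zero.mpr hρ.ne'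
    refine h2.congr_deriv ?_
    field_simp
    ring_nf
    rw [Complex.I_sq]
    ring
  -- integrability helpers
  have hII : ∀ (g : ℝ → ℂ), ContinuousOn g (Icc (0:ℝ) Real.pi) →
      IntervalIntegrable g MeasureTheory.volume 0 Real.pi := fun g hg =>
    ContinuousOn.intervalIntegrable (by rwa [uIcc_of_le hπ])
  have hII2 : ∀ (g : ℝ → ℂ), ContinuousOn g (Icc r R) →
      IntervalIntegrable g MeasureTheory.volume r R := fun g hg =>
    ContinuousOn.intervalIntegrable (by rwa [uIcc_of_le hrR])
  have hct : ∀ ρ : ℝ, 0 ≤ ρ →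
      ContinuousOn (fun t : ℝ => f ((w:ℂ) + ρ * Complex.exp (-I * t))) (Icc 0 Real.pi) :=
    fun ρ hρ => hcont.comp (by fun_prop) (fun t ht => hmem ρ t hρ ht)
  have hctF : ∀ ρ : ℝ, 0 ≤ ρ →
      ContinuousOn (fun t : ℝ =>
        Complex.exp (-I * t) * deriv f ((w:ℂ) + ρ * Complex.exp (-I * t))) (Icc 0 Real.pi) :=
    fun ρ hρ => (Continuous.continuousOn (by fun_prop)).mul
      (hFcont.comp (by fun_prop) (fun t ht => hmem ρ t hρ ht))
  have hρpos : ∀ ρ ∈ uIcc r R, 0 < ρ := by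
    intro ρ hρ
    rw [uIcc_of_le hrR] at hρ
    exact hr.trans_le hρ.1
  -- segment substitutions
  have seg_left : (∫ x in (w - R)..(w - r), f x / (x - w))
      = ∫ ρ in r..R, f ((w:ℂ) - ρ) / (-(ρ:ℂ)) := by
    rw [← intervalIntegral.integral_comp_sub_left (fun x : ℝ => f x / ((x:ℂ) - w)) w]
    apply intervalIntegral.integral_congr
    intro ρ _
    push_cast
    ring_nf
  have seg_right : (∫ x in (w + r)..(w + R), f x / (x - w))
      = ∫ ρ in r..R, f ((w:ℂ) + ρ) / (ρ:ℂ) := by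
    rw [← intervalIntegral.integral_comp_add_left (fun x : ℝ => f x / ((x:ℂ) - w)) w]
    apply intervalIntegral.integral_congr
    intro ρ _
    push_cast
    ring_nf
  have int_minus : IntervalIntegrable (fun ρ : ℝ => f ((w:ℂ) - ρ) / (-(ρ:ℂ)))
      MeasureTheory.volume r R := by
    apply hII2
    apply ContinuousOn.div
    · exact hcont.comp (by fun_prop) (fun ρ _ => hsub (by simp))
    · fun_prop
    · intro ρ hρ
      simpa using (hr.trans_le hρ.1).ne'
  have int_plus : IntervalIntegrable (fun ρ : ℝ => f ((w:ℂ) + ρ) / (ρ:ℂ))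
      MeasureTheory.volume r R := by
    apply hII2
    apply ContinuousOn.div
    · exact hcont.comp (by fun_prop) (fun ρ _ => hsub (by simp))
    · fun_prop
    · intro ρ hρ
      exact Complex.ofReal_ne_zero.mpr (hr.trans_le hρ.1).ne'
  -- inner t-integral evaluation
  have hexppi : Complex.exp (-I * (Real.pi:ℝ)) = -1 := by
    rw [show (-I * ((Real.pi:ℝ):ℂ)) = -((Real.pi:ℂ) * I) by ring, Complex.exp_neg,
      Complex.exp_pi_mul_I]
    norm_num
  have inner_eval : ∀ ρ : ℝ, 0 < ρ →
      (∫ t in (0:ℝ)..Real.pi,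
          Complex.exp (-I * t) * deriv f ((w:ℂ) + ρ * Complex.exp (-I * t)))
        = (I / ρ) * (f ((w:ℂ) - ρ) - f ((w:ℂ) + ρ)) := by
    intro ρ hρ
    rw [intervalIntegral.integral_eq_sub_of_hasDerivAt
      (fun t ht => hder_t ρ t hρ (by rwa [uIcc_of_le hπ] at ht)) (hII _ (hctF ρ hρ.le))]
    have e1 : ((w:ℂ) + ρ * Complex.exp (-I * (Real.pi:ℝ))) = ((w:ℂ) - ρ) := by
      rw [hexppi]; ring
    have e2 : ((w:ℂ) + ρ * Complex.exp (-I * ((0:ℝ):ℂ))) = ((w:ℂ) + ρ) := by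
      norm_num
    rw [e1, e2, mul_sub]
  -- main computation for the RHS
  have hRHS : (-I * ∫ t in (0:ℝ)..Real.pi, f ((w:ℂ) + r * Complex.exp (-I * t)))
        - (-I * ∫ t in (0:ℝ)..Real.pi, f ((w:ℂ) + R * Complex.exp (-I * t)))
      = ∫ ρ in r..R, (f ((w:ℂ) - ρ) / (-(ρ:ℂ)) + f ((w:ℂ) + ρ) / (ρ:ℂ)) := by
    have h1 : (-I * ∫ t in (0:ℝ)..Real.pi, f ((w:ℂ) + r * Complex.exp (-I * t)))
          - (-I * ∫ t in (0:ℝ)..Real.pi, f ((w:ℂ) + R * Complex.exp (-I * t)))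
        = -I * ∫ t in (0:ℝ)..Real.pi,
            (f ((w:ℂ) + r * Complex.exp (-I * t)) - f ((w:ℂ) + R * Complex.exp (-I * t))) := by
      rw [intervalIntegral.integral_sub (hII _ (hct r hr.le)) (hII _ (hct R hR0))]
      ring
    rw [h1]
    have h2 : ∀ t ∈ uIcc (0:ℝ) Real.pi,
        f ((w:ℂ) + r * Complex.exp (-I * t)) - f ((w:ℂ) + R * Complex.exp (-I * t))
          = -∫ ρ in r..R, Complex.exp (-I * t) * deriv f ((w:ℂ) + ρ * Complex.exp (-I * t)) := by
      intro t ht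
      rw [uIcc_of_le hπ] at ht
      rw [intervalIntegral.integral_eq_sub_of_hasDerivAt
        (fun ρ hρ => hder_ρ t ρ (hρpos ρ hρ).le ht)
        (hII2 _ ((Continuous.continuousOn (by fun_prop)).mul
          (hFcont.comp (by fun_prop) (fun ρ hρ => hmem ρ t (hr.le.trans hρ.1) ht))))]
      ring
    rw [intervalIntegral.integral_congr h2, intervalIntegral.integral_neg]
    rw [pv_fubini hπ hrR _ (by
      apply ContinuousOn.mul
      · exact Continuous.continuousOn (by fun_prop)
      · exact hFcont.comp (by fun_prop)
          (fun p hp => hmem p.2 p.1 (hr.le.trans hp.2.1) hp.1))]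
    rw [intervalIntegral.integral_congr (fun ρ hρ => inner_eval ρ (hρpos ρ hρ))]
    rw [neg_mul_neg, ← intervalIntegral.integral_const_mul]
    apply intervalIntegral.integral_congr
    intro ρ hρ
    have hρ0 : (ρ:ℂ) ≠ 0 := Complex.ofReal_ne_zero.mpr (hρpos ρ hρ).ne'
    field_simp
    ring_nf
    rw [Complex.I_sq]
    ring_nf
  rw [seg_left, seg_right, ← intervalIntegral.integral_add int_minus int_plus, hRHS]

theorem pv_integral_lower_half_plane
    (w : ℝ) (f : ℂ → ℂ) (U : Set ℂ) (hU : IsOpen U)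
    (hsub : {z : ℂ | z.im ≤ 0} ⊆ U) (hf : DifferentiableOn ℂ f U)
    (hdecay :
      Tendsto (fun R : ℝ => ⨆ t ∈ Set.Icc (0:ℝ) Real.pi,
          ‖f (w + R * Complex.exp (-I * t))‖) atTop (𝓝 0)) :
    Tendsto
      (fun p : ℝ × ℝ =>
        (∫ x in (w - p.1)..(w - p.2), f x / (x - w)) +
          ∫ x in (w + p.2)..(w + p.1), f x / (x - w))
      (atTop ×ˢ 𝓝[>] 0) (𝓝 (-(I * Real.pi) * f w)) := by
  have hπ : (0:ℝ) ≤ Real.pi := Real.pi_nonneg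
  have hcont : ContinuousOn f U := hf.continuousOn
  have hmem : ∀ ρ t : ℝ, 0 ≤ ρ → t ∈ Icc (0:ℝ) Real.pi →
      ((w:ℂ) + ρ * Complex.exp (-I * t)) ∈ U := fun ρ t hρ ht => hsub (by
        have h : ((w:ℂ) + ρ * Complex.exp (-I * t)).im = ρ * (-Real.sin t) := by
          simp [Complex.exp_im, Complex.exp_re]
        have := Real.sin_nonneg_of_nonneg_of_le_pi ht.1 ht.2
        show ((w:ℂ) + ρ * Complex.exp (-I * t)).im ≤ 0
        rw [h]; nlinarith)
  have hct : ∀ ρ : ℝ, 0 ≤ ρ →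
      ContinuousOn (fun t : ℝ => f ((w:ℂ) + ρ * Complex.exp (-I * t))) (Icc 0 Real.pi) :=
    fun ρ hρ => hcont.comp (by fun_prop) (fun t ht => hmem ρ t hρ ht)
  have hII : ∀ (g : ℝ → ℂ), ContinuousOn g (Icc (0:ℝ) Real.pi) →
      IntervalIntegrable g MeasureTheory.volume 0 Real.pi := fun g hg =>
    ContinuousOn.intervalIntegrable (by rwa [uIcc_of_le hπ])
  set A : ℝ → ℂ := fun ρ =>
    -I * ∫ t in (0:ℝ)..Real.pi, f ((w:ℂ) + ρ * Complex.exp (-I * t)) with hAdef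
  -- limit at infinity
  have hAtop : Tendsto A atTop (𝓝 0) := by
    apply squeeze_zero_norm' (a := fun R : ℝ =>
      (⨆ t ∈ Set.Icc (0:ℝ) Real.pi, ‖f (w + R * Complex.exp (-I * t))‖) * Real.pi)
    · filter_upwards [eventually_ge_atTop (0:ℝ)] with R hR
      have hbdd : BddAbove ((fun t : ℝ =>
          ‖f ((w:ℂ) + R * Complex.exp (-I * t))‖) '' Icc 0 Real.pi) :=
        isCompact_Icc.bddAbove_image (continuous_norm.comp_continuousOn (hct R hR))
      have hb : ∀ t ∈ Set.uIoc (0:ℝ) Real.pi,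
          ‖f ((w:ℂ) + R * Complex.exp (-I * t))‖ ≤
            ⨆ t ∈ Set.Icc (0:ℝ) Real.pi, ‖f (w + R * Complex.exp (-I * t))‖ := by
        intro t ht
        rw [Set.uIoc_of_le hπ] at ht
        have ht' := Ioc_subset_Icc_self ht
        have hb2 : BddAbove (Set.range fun t : ℝ =>
            ⨆ (_ : t ∈ Icc (0:ℝ) Real.pi), ‖f ((w:ℂ) + R * Complex.exp (-I * t))‖) := by
          obtain ⟨M, hM⟩ := hbdd
          refine ⟨max M 0, ?_⟩
          rintro x ⟨s, rfl⟩
          dsimp only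
          by_cases h : s ∈ Icc (0:ℝ) Real.pi
          · rw [ciSup_pos h]
            exact le_max_of_le_left (hM (Set.mem_image_of_mem _ h))
          · rw [ciSup_neg h, Real.sSup_empty]
            exact le_max_right _ _
        have hle := le_ciSup hb2 t
        rwa [ciSup_pos ht'] at hle
      have := intervalIntegral.norm_integral_le_of_norm_le_const hb
      calc ‖A R‖ = ‖∫ t in (0:ℝ)..Real.pi, f ((w:ℂ) + R * Complex.exp (-I * t))‖ := by
            rw [hAdef]; simp [norm_mul]
        _ ≤ _ := by
            rw [show |Real.pi - 0| = Real.pi by rw [sub_zero, _root_.abs_of_nonneg hπ]] at this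
            exact this
    · simpa using hdecay.mul_const Real.pi
  -- limit at 0+
  have hAr : Tendsto A (𝓝[>] (0:ℝ)) (𝓝 (-(I * Real.pi) * f w)) := by
    rw [Metric.tendsto_nhdsWithin_nhds]
    intro ε hε
    have hfc : ContinuousAt f w :=
      (hf.differentiableAt (hU.mem_nhds (hsub (by simp)))).continuousAt
    rw [Metric.continuousAt_iff] at hfc
    obtain ⟨δ, hδ, hδ'⟩ := hfc (ε / (Real.pi + 1)) (by positivity)
    refine ⟨δ, hδ, ?_⟩
    intro r hrpos hrδ
    have hr0 : 0 < r := hrpos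
    have hdiff : A r - (-(I * Real.pi) * f w)
        = -I * ∫ t in (0:ℝ)..Real.pi, (f ((w:ℂ) + r * Complex.exp (-I * t)) - f w) := by
      rw [intervalIntegral.integral_sub (hII _ (hct r hr0.le)) intervalIntegrable_const,
        intervalIntegral.integral_const, hAdef]
      simp only [sub_zero, real_smul]
      ring
    rw [dist_eq_norm, hdiff]
    have hb : ∀ t ∈ Set.uIoc (0:ℝ) Real.pi,
        ‖f ((w:ℂ) + r * Complex.exp (-I * t)) - f w‖ ≤ ε / (Real.pi + 1) := by
      intro t ht
      have : dist ((w:ℂ) + r * Complex.exp (-I * t)) w < δ := by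
        rw [Complex.dist_eq]
        have : ((w:ℂ) + r * Complex.exp (-I * t) - w) = r * Complex.exp (-I * t) := by ring
        rw [this]
        rw [norm_mul, Complex.norm_exp]
        have : (-I * (t:ℂ)).re = 0 := by simp
        rw [this]
        simp only [Real.exp_zero, mul_one, Complex.norm_real, Real.norm_eq_abs, abs_of_pos hr0]
        rw [Real.dist_eq, sub_zero, abs_of_pos hr0] at hrδ
        exact hrδ
      have := hδ' this
      rw [dist_eq_norm] at this
      exact this.le
    have hnorm := intervalIntegral.norm_integral_le_of_norm_le_const hb
    rw [norm_mul]
    have hI : ‖(-I : ℂ)‖ = 1 := by simp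
    rw [hI, one_mul]
    calc ‖∫ t in (0:ℝ)..Real.pi, (f ((w:ℂ) + r * Complex.exp (-I * t)) - f w)‖
        ≤ ε / (Real.pi + 1) * |Real.pi - 0| := hnorm
      _ < ε := by
          rw [sub_zero, _root_.abs_of_nonneg hπ]
          rw [div_mul_eq_mul_div, div_lt_iff₀ (by positivity)]
          nlinarith [Real.pi_pos]
  have hmain : Tendsto (fun p : ℝ × ℝ => A p.2 - A p.1) (atTop ×ˢ 𝓝[>] (0:ℝ))
      (𝓝 (-(I * Real.pi) * f w)) := by
    have h := (hAr.comp tendsto_snd).sub (hAtop.comp tendsto_fst)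
    simpa using h
  apply Filter.Tendsto.congr' _ hmain
  have e1 : ∀ᶠ p : ℝ × ℝ in atTop ×ˢ 𝓝[>] (0:ℝ), (1:ℝ) ≤ p.1 :=
    (eventually_ge_atTop 1).prod_inl _
  have e2 : ∀ᶠ p : ℝ × ℝ in atTop ×ˢ 𝓝[>] (0:ℝ), p.2 ∈ Ioo (0:ℝ) 1 :=
    Filter.Eventually.prod_inr
      (Filter.eventually_mem_set.mpr (Ioo_mem_nhdsGT_of_mem ⟨le_refl (0:ℝ), zero_lt_one⟩)) _
  filter_upwards [e1, e2] with p h1 h2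
  exact (pv_key w f U hU hsub hf h2.1 (h2.2.le.trans h1)).symm
end

section
/- For every w ∈ ℝ, the principal value of ∫_{-∞}^{∞} e^{ix}/(x − w) dx equals iπ·e^{iw}. -/
open Complex intervalIntegral Filter Topology

section Aux
open MeasureTheory Set


lemma int_exp_decay {x : ℝ} (hx : 0 < x) :
    ∫ t in Ioi (0:ℝ), Real.exp (-(x*t)) = 1/x := by
  have := integral_comp_mul_left_Ioi (fun u => Real.exp (-u)) 0 hx
  simp only [mul_zero, integral_exp_neg_Ioi, neg_zero, Real.exp_zero, smul_eq_mul, mul_one] at this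
  simpa [one_div] using this

lemma sinc_abs_le (x : ℝ) : |Real.sin x / x| ≤ 1 := by
  rcases eq_or_ne x 0 with h | h
  · simp [h]
  · rw [abs_div, div_le_one (abs_pos.2 h)]
    exact Real.abs_sin_le_abs

lemma sinc_meas : Measurable fun x : ℝ => Real.sin x / x :=
  Real.measurable_sin.div measurable_id

lemma sinc_intInt (a b : ℝ) : IntervalIntegrable (fun x => Real.sin x / x) volume a b := by
  apply IntervalIntegrable.mono_fun' (g := fun _ => (1:ℝ)) intervalIntegrable_const
    sinc_meas.aestronglyMeasurable
  exact Filter.Eventually.of_forall fun x => by simp only [Real.norm_eq_abs]; exact sinc_abs_le x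

lemma dir_antideriv (t R : ℝ) :
    ∫ x in (0:ℝ)..R, Real.exp (-(t*x)) * Real.sin x
      = (1 - Real.exp (-(t*R)) * (Real.cos R + t * Real.sin R)) / (1 + t^2) := by
  have h1 : (1:ℝ) + t^2 ≠ 0 := by positivity
  have key : ∀ x : ℝ, HasDerivAt (fun x : ℝ =>
      -(Real.exp (-(t*x)) * (t * Real.sin x + Real.cos x)) / (1 + t^2))
      (Real.exp (-(t*x)) * Real.sin x) x := by
    intro x
    have he : HasDerivAt (fun x : ℝ => Real.exp (-(t*x))) (-t * Real.exp (-(t*x))) x := by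
      have := (Real.hasDerivAt_exp (-(t*x))).comp x (((hasDerivAt_id x).const_mul t).neg)
      exact this.congr_deriv (by ring)
    have hs : HasDerivAt (fun x : ℝ => t * Real.sin x + Real.cos x)
        (t * Real.cos x + (- Real.sin x)) x :=
      ((Real.hasDerivAt_sin x).const_mul t).add (Real.hasDerivAt_cos x)
    have := ((he.mul hs).neg).div_const (1 + t^2)
    refine this.congr_deriv ?_
    field_simp
    ring
  rw [integral_eq_sub_of_hasDerivAt (fun x _ => key x)]
  · field_simp
    simp only [mul_zero, neg_zero, Real.exp_zero, Real.sin_zero, Real.cos_zero]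
    ring
  · apply Continuous.intervalIntegrable
    continuity

lemma dirichlet_fubini {R : ℝ} (hR : 0 < R) :
    ∫ x in (0:ℝ)..R, Real.sin x / x
      = ∫ t in Ioi (0:ℝ), (1 - Real.exp (-(t*R)) * (Real.cos R + t * Real.sin R)) / (1 + t^2) := by
  have hmeas : AEStronglyMeasurable (fun p : ℝ × ℝ => Real.exp (-(p.1*p.2)) * Real.sin p.1)
      ((volume.restrict (Ioc 0 R)).prod (volume.restrict (Ioi 0))) :=
    Continuous.aestronglyMeasurable ((Real.continuous_exp.comp (continuous_fst.mul continuous_snd).neg).mul (Real.continuous_sin.comp continuous_fst))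
  have hprod : Integrable (fun p : ℝ × ℝ => Real.exp (-(p.1*p.2)) * Real.sin p.1)
      ((volume.restrict (Ioc 0 R)).prod (volume.restrict (Ioi 0))) := by
    rw [integrable_prod_iff hmeas]
    constructor
    · filter_upwards [ae_restrict_mem measurableSet_Ioc] with x hx
      have := (exp_neg_integrableOn_Ioi 0 hx.1).mul_const (Real.sin x)
      simpa [neg_mul] using this
    · apply Integrable.mono' (g := fun _ => (1:ℝ)) (integrableOn_const measure_Ioc_lt_top.ne)
        hmeas.norm.integral_prod_right'
      filter_upwards [ae_restrict_mem measurableSet_Ioc] with x hx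
      have hx0 := hx.1
      have hcalc : ∫ t in Ioi (0:ℝ), ‖Real.exp (-(x*t)) * Real.sin x‖
          = |Real.sin x| / x := by
        simp only [norm_mul, Real.norm_eq_abs, Real.abs_exp]
        rw [MeasureTheory.integral_mul_const, int_exp_decay hx0]
        ring
      rw [Real.norm_eq_abs, hcalc, _root_.abs_of_nonneg (by positivity)]
      calc |Real.sin x| / x ≤ x / x := by
            gcongr; exact Real.abs_sin_le_abs.trans_eq (abs_of_pos hx0)
        _ ≤ 1 := by rw [div_self hx0.ne']
  calc ∫ x in (0:ℝ)..R, Real.sin x / x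
      = ∫ x in Ioc (0:ℝ) R, Real.sin x / x := integral_of_le hR.le
    _ = ∫ x in Ioc (0:ℝ) R, ∫ t in Ioi (0:ℝ), Real.exp (-(x*t)) * Real.sin x := by
        refine setIntegral_congr_fun measurableSet_Ioc fun x hx => ?_
        rw [MeasureTheory.integral_mul_const, int_exp_decay hx.1]
        ring
    _ = ∫ t in Ioi (0:ℝ), ∫ x in Ioc (0:ℝ) R, Real.exp (-(x*t)) * Real.sin x :=
        integral_integral_swap hprod
    _ = _ := by
        refine setIntegral_congr_fun measurableSet_Ioi fun t _ => ?_
        rw [← integral_of_le hR.le,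
          show (fun x => Real.exp (-(x*t)) * Real.sin x)
            = fun x => Real.exp (-(t*x)) * Real.sin x from funext fun x => by rw [mul_comm x t],
          dir_antideriv t R]

lemma err_bound {R t : ℝ} (ht : 0 < t) :
    ‖Real.exp (-(t*R)) * (Real.cos R + t * Real.sin R) / (1 + t^2)‖ ≤ 2 * Real.exp (-(R*t)) := by
  rw [Real.norm_eq_abs, abs_div, abs_of_pos (by positivity : (0:ℝ) < 1 + t^2), abs_mul,
    Real.abs_exp, mul_comm t R]
  rw [div_le_iff₀ (by positivity)]
  have h1 : |Real.cos R + t * Real.sin R| ≤ 1 + t := by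
    have ha := abs_add_le (Real.cos R) (t * Real.sin R)
    have h3 : |t * Real.sin R| ≤ t := by
      rw [abs_mul, abs_of_pos ht]
      calc t * |Real.sin R| ≤ t * 1 := by gcongr; exact Real.abs_sin_le_one R
        _ = t := mul_one t
    linarith [Real.abs_cos_le_one R]
  have h2 : 1 + t ≤ 2 * (1 + t^2) := by nlinarith [sq_nonneg (t - 1), sq_nonneg t]
  calc Real.exp (-(R*t)) * |Real.cos R + t * Real.sin R|
      ≤ Real.exp (-(R*t)) * (2 * (1 + t^2)) := by gcongr; exact h1.trans h2
    _ = 2 * Real.exp (-(R*t)) * (1 + t^2) := by ring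

lemma err_integrable {R : ℝ} (hR : 0 < R) :
    IntegrableOn (fun t => Real.exp (-(t*R)) * (Real.cos R + t * Real.sin R) / (1 + t^2))
      (Ioi 0) := by
  apply Integrable.mono' ((exp_neg_integrableOn_Ioi 0 hR).const_mul 2)
  · exact Continuous.aestronglyMeasurable (by fun_prop (disch := intros; positivity))
  · filter_upwards [ae_restrict_mem measurableSet_Ioi] with t ht
    simpa [neg_mul] using err_bound ht

lemma inv_sq_integrable : IntegrableOn (fun t : ℝ => (1 + t^2)⁻¹) (Ioi 0) :=
  integrable_inv_one_add_sq.integrableOn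

lemma err_tendsto :
    Tendsto (fun R => ∫ t in Ioi (0:ℝ),
      Real.exp (-(t*R)) * (Real.cos R + t * Real.sin R) / (1 + t^2)) atTop (𝓝 0) := by
  apply squeeze_zero_norm' (a := fun R => 2 / R)
  · filter_upwards [eventually_gt_atTop (0:ℝ)] with R hR
    calc ‖∫ t in Ioi (0:ℝ), Real.exp (-(t*R)) * (Real.cos R + t * Real.sin R) / (1 + t^2)‖
        ≤ ∫ t in Ioi (0:ℝ), 2 * Real.exp (-R*t) :=
          norm_integral_le_of_norm_le ((exp_neg_integrableOn_Ioi 0 hR).const_mul 2)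
            (by filter_upwards [ae_restrict_mem measurableSet_Ioi] with t ht
                simpa [neg_mul] using err_bound ht)
      _ = 2 / R := by
          rw [MeasureTheory.integral_const_mul,
            show (fun t : ℝ => Real.exp (-R * t)) = fun t => Real.exp (-(R*t)) from
              funext fun t => by rw [neg_mul],
            int_exp_decay hR]
          ring
  · simpa [div_eq_mul_inv] using tendsto_inv_atTop_zero.const_mul (2:ℝ)

lemma dirichlet_limit :
    Tendsto (fun R => ∫ x in (0:ℝ)..R, Real.sin x / x) atTop (𝓝 (Real.pi / 2)) := by
  have key : ∀ᶠ R in atTop, Real.pi / 2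
        - (∫ t in Ioi (0:ℝ), Real.exp (-(t*R)) * (Real.cos R + t * Real.sin R) / (1 + t^2))
      = ∫ x in (0:ℝ)..R, Real.sin x / x := by
    filter_upwards [eventually_gt_atTop (0:ℝ)] with R hR
    rw [dirichlet_fubini hR]
    have split : ∫ t in Ioi (0:ℝ),
        (1 - Real.exp (-(t*R)) * (Real.cos R + t * Real.sin R)) / (1 + t^2)
        = (∫ t in Ioi (0:ℝ), (1 + t^2)⁻¹)
          - ∫ t in Ioi (0:ℝ), Real.exp (-(t*R)) * (Real.cos R + t * Real.sin R) / (1 + t^2) := by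
      rw [← MeasureTheory.integral_sub inv_sq_integrable (err_integrable hR)]
      congr 1; funext t
      rw [sub_div, one_div]
    rw [split, integral_Ioi_inv_one_add_sq]
    simp [Real.arctan_zero]
  apply Tendsto.congr' key
  simpa using tendsto_const_nhds.sub err_tendsto

lemma dirichlet_joint :
    Tendsto (fun p : ℝ × ℝ => ∫ x in p.2..p.1, Real.sin x / x) (atTop ×ˢ 𝓝[>] (0:ℝ))
      (𝓝 (Real.pi / 2)) := by
  have hg : Continuous fun y : ℝ => ∫ x in (0:ℝ)..y, Real.sin x / x :=
    intervalIntegral.continuous_primitive (fun a b => sinc_intInt a b) 0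
  have h1 : Tendsto (fun p : ℝ × ℝ => ∫ x in (0:ℝ)..p.1, Real.sin x / x) (atTop ×ˢ 𝓝[>] (0:ℝ))
      (𝓝 (Real.pi/2)) := dirichlet_limit.comp tendsto_fst
  have h2 : Tendsto (fun p : ℝ × ℝ => ∫ x in (0:ℝ)..p.2, Real.sin x / x) (atTop ×ˢ 𝓝[>] (0:ℝ))
      (𝓝 0) := by
    have h0 : Tendsto (fun y : ℝ => ∫ x in (0:ℝ)..y, Real.sin x / x) (𝓝[>] 0) (𝓝 0) := by
      have := (hg.tendsto 0).mono_left (nhdsWithin_le_nhds (s := Ioi (0:ℝ)))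
      simpa using this
    exact h0.comp tendsto_snd
  have := h1.sub h2
  rw [sub_zero] at this
  apply this.congr
  intro p
  exact integral_interval_sub_left (sinc_intInt 0 p.1) (sinc_intInt 0 p.2)

lemma pv_eq {w r R : ℝ} (hr : 0 < r) (hR : 0 < R) :
    ((∫ x in (w - R)..(w - r), Complex.exp (I * x) / (x - w)) +
      ∫ x in (w + r)..(w + R), Complex.exp (I * x) / (x - w))
    = Complex.exp (I * w) * (2 * I) * ((∫ x in r..R, Real.sin x / x : ℝ) : ℂ) := by
  have e1 : (∫ x in (w - R)..(w - r), Complex.exp (I * x) / (x - w))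
      = ∫ x in (-R)..(-r), Complex.exp (I * (x + w : ℝ)) / ((x + w : ℝ) - w) := by
    rw [integral_comp_add_right (fun x : ℝ => Complex.exp (I * x) / ((x : ℂ) - w)) w,
      show -R + w = w - R from by ring, show -r + w = w - r from by ring]
  have e1' : (∫ x in (-R)..(-r), Complex.exp (I * (x + w : ℝ)) / ((x + w : ℝ) - w))
      = ∫ x in r..R, Complex.exp (I * (-x + w : ℝ)) / ((-x + w : ℝ) - w) := by
    rw [← integral_comp_neg (fun x : ℝ => Complex.exp (I * (x + w : ℝ)) / ((x + w : ℝ) - (w:ℂ)))]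
  have e2 : (∫ x in (w + r)..(w + R), Complex.exp (I * x) / (x - w))
      = ∫ x in r..R, Complex.exp (I * (x + w : ℝ)) / ((x + w : ℝ) - w) := by
    rw [integral_comp_add_right (fun x : ℝ => Complex.exp (I * x) / ((x : ℂ) - w)) w,
      show r + w = w + r from by ring, show R + w = w + R from by ring]
  rw [e1, e1', e2]
  have hmin : 0 < min r R := lt_min hr hR
  have i1 : IntervalIntegrable
      (fun x : ℝ => Complex.exp (I * (-x + w : ℝ)) / ((-x + w : ℝ) - (w:ℂ))) volume r R := by
    apply ContinuousOn.intervalIntegrable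
    apply ContinuousOn.div (by fun_prop) (by fun_prop)
    intro x hx
    have hx0 : 0 < x := lt_of_lt_of_le hmin hx.1
    push_cast
    intro h
    apply hx0.ne'
    have : (x : ℂ) = 0 := by linear_combination -h
    exact_mod_cast this
  have i2 : IntervalIntegrable
      (fun x : ℝ => Complex.exp (I * (x + w : ℝ)) / ((x + w : ℝ) - (w:ℂ))) volume r R := by
    apply ContinuousOn.intervalIntegrable
    apply ContinuousOn.div (by fun_prop) (by fun_prop)
    intro x hx
    have hx0 : 0 < x := lt_of_lt_of_le hmin hx.1
    push_cast
    intro h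
    apply hx0.ne'
    have : (x : ℂ) = 0 := by linear_combination h
    exact_mod_cast this
  rw [← integral_add i1 i2]
  have hptwise : ∀ x : ℝ,
      Complex.exp (I * (-x + w : ℝ)) / ((-x + w : ℝ) - (w:ℂ))
        + Complex.exp (I * (x + w : ℝ)) / ((x + w : ℝ) - (w:ℂ))
      = Complex.exp (I * w) * (2 * I) * ((Real.sin x / x : ℝ) : ℂ) := by
    intro x
    rcases eq_or_ne x 0 with h0 | h0
    · simp [h0]
    · have hxc : (x : ℂ) ≠ 0 := Complex.ofReal_ne_zero.2 h0
      push_cast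
      rw [show ((-x : ℂ) + w) - w = -x from by ring, show ((x : ℂ) + w) - w = (x:ℂ) from by ring]
      have hdiff : Complex.exp (I * x) - Complex.exp (-(I * x)) = 2 * Complex.sin x * I := by
        rw [show -(I*(x:ℂ)) = (-x:ℂ)*I from by ring, show I*(x:ℂ) = (x:ℂ)*I from by ring,
          Complex.exp_mul_I, Complex.exp_mul_I, Complex.sin_neg, Complex.cos_neg]
        ring
      have hexp : Complex.exp (I * (-x + w : ℂ)) = Complex.exp (I * (-x:ℂ)) * Complex.exp (I * w) := by
        rw [← Complex.exp_add]; ring_nf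
      have hexp2 : Complex.exp (I * ((x:ℂ) + w)) = Complex.exp (I * (x:ℂ)) * Complex.exp (I * w) := by
        rw [← Complex.exp_add]; ring_nf
      rw [hexp, hexp2]
      field_simp [hxc]
      linear_combination hdiff
  rw [funext hptwise, intervalIntegral.integral_const_mul, _root_.intervalIntegral.integral_ofReal]

end Aux


theorem pv_exp_over_x_sub_w (w : ℝ) :
    Tendsto
      (fun p : ℝ × ℝ =>
        (∫ x in (w - p.1)..(w - p.2), Complex.exp (I * x) / (x - w)) +
          ∫ x in (w + p.2)..(w + p.1), Complex.exp (I * x) / (x - w))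
      (atTop ×ˢ 𝓝[>] 0) (𝓝 (I * Real.pi * Complex.exp (I * w))) := by
  have hT : Tendsto (fun p : ℝ × ℝ => Complex.exp (I * w) * (2 * I) *
      ((∫ x in p.2..p.1, Real.sin x / x : ℝ) : ℂ)) (atTop ×ˢ 𝓝[>] (0:ℝ))
      (𝓝 (Complex.exp (I * w) * (2 * I) * ((Real.pi / 2 : ℝ) : ℂ))) :=
    ((Complex.continuous_ofReal.tendsto _).comp dirichlet_joint).const_mul _
  have hval : Complex.exp (I * w) * (2 * I) * ((Real.pi / 2 : ℝ) : ℂ)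
      = I * Real.pi * Complex.exp (I * w) := by
    push_cast; ring
  rw [← hval]
  apply hT.congr'
  have h1 : ∀ᶠ p : ℝ × ℝ in atTop ×ˢ 𝓝[>] (0:ℝ), 0 < p.1 :=
    (eventually_gt_atTop (0:ℝ)).prod_inl _
  have h2 : ∀ᶠ p : ℝ × ℝ in atTop ×ˢ 𝓝[>] (0:ℝ), 0 < p.2 :=
    Filter.Eventually.prod_inr (self_mem_nhdsWithin) _
  filter_upwards [h1, h2] with p hp1 hp2
  exact (pv_eq hp2 hp1).symm
end

section
/- For every w ∈ ℝ, the principal value integral (1/π)·∫_{-∞}^{∞} cos(x)/(w − x) dx equals sin(w); that is, the Hilbert transform of cosine is sine. -/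
open intervalIntegral Filter Topology MeasureTheory Set Real

/-- Antiderivative computation: ∫₀^R e^{-st} sin t dt. -/
lemma aux_integral_exp_mul_sin (s R : ℝ) :
    ∫ t in (0:ℝ)..R, Real.exp (-(s*t)) * Real.sin t
      = (1 - Real.exp (-(s*R)) * (s * Real.sin R + Real.cos R)) / (1 + s^2) := by
  have hs : (0:ℝ) < 1 + s^2 := by positivity
  have hF : ∀ t : ℝ, HasDerivAt
      (fun t => -(Real.exp (-(s*t)) * (s * Real.sin t + Real.cos t)) / (1 + s^2))
      (Real.exp (-(s*t)) * Real.sin t) t := by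
    intro t
    have h1 : HasDerivAt (fun t : ℝ => -(s*t)) (-s) t := by
      have := ((hasDerivAt_id t).const_mul s).neg
      simpa [Pi.neg_def] using this
    have h2 : HasDerivAt (fun t : ℝ => Real.exp (-(s*t))) (Real.exp (-(s*t)) * (-s)) t := h1.exp
    have h3 : HasDerivAt (fun t : ℝ => s * Real.sin t + Real.cos t)
        (s * Real.cos t + (-Real.sin t)) t :=
      ((Real.hasDerivAt_sin t).const_mul s).add (Real.hasDerivAt_cos t)
    have h4 := ((h2.mul h3).neg).div_const (1 + s^2)
    refine h4.congr_deriv ?_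
    field_simp
    ring
  rw [intervalIntegral.integral_eq_sub_of_hasDerivAt (fun t _ => hF t)
    (Continuous.intervalIntegrable (by continuity) 0 R)]
  simp [Real.exp_zero]
  ring

/-- ∫_{0}^{∞} e^{-st} ds = 1/t for t > 0. -/
lemma aux_integral_exp_Ioi {t : ℝ} (ht : 0 < t) :
    ∫ s in Ioi (0:ℝ), Real.exp (-(s*t)) = 1/t := by
  have hF : ∀ s : ℝ, HasDerivAt (fun s => -(Real.exp (-(s*t))/t)) (Real.exp (-(s*t))) s := by
    intro s
    have h1 : HasDerivAt (fun s : ℝ => -(s*t)) (-t) s := by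
      have := ((hasDerivAt_id s).mul_const t).neg
      simpa [Pi.neg_def] using this
    have h2 := (h1.exp.div_const t).neg
    refine h2.congr_deriv ?_
    field_simp
  have hint : IntegrableOn (fun s => Real.exp (-(s*t))) (Ioi (0:ℝ)) := by
    have := exp_neg_integrableOn_Ioi 0 ht
    simpa [mul_comm] using this
  have hlim : Tendsto (fun s => -(Real.exp (-(s*t))/t)) atTop (𝓝 0) := by
    have h0 : Tendsto (fun s : ℝ => -(s*t)) atTop atBot := by
      exact tendsto_neg_atTop_atBot.comp (tendsto_id.atTop_mul_const ht)
    have := (Real.tendsto_exp_atBot.comp h0).div_const t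
    simpa using this.neg
  have := integral_Ioi_of_hasDerivAt_of_tendsto' (fun s _ => hF s) hint hlim
  simp at this
  rw [this]
  ring




/-- Fubini: the truncated Dirichlet integral as a Laplace-type integral. -/
lemma aux_dirichlet_trunc {R : ℝ} (hR : 0 < R) :
    ∫ t in (0:ℝ)..R, Real.sin t / t
      = ∫ s in Ioi (0:ℝ), (1 - Real.exp (-(s*R)) * (s * Real.sin R + Real.cos R)) / (1 + s^2) := by
  set μ := volume.restrict (Ioc (0:ℝ) R)
  set ν := volume.restrict (Ioi (0:ℝ))
  have hmeas : AEStronglyMeasurable (fun p : ℝ × ℝ => Real.exp (-(p.2 * p.1)) * Real.sin p.1)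
      (μ.prod ν) := by
    apply Continuous.aestronglyMeasurable
    exact (Real.continuous_exp.comp (continuous_snd.mul continuous_fst).neg).mul
      (Real.continuous_sin.comp continuous_fst)
  have hInt : Integrable (fun p : ℝ × ℝ => Real.exp (-(p.2 * p.1)) * Real.sin p.1) (μ.prod ν) := by
    rw [MeasureTheory.integrable_prod_iff hmeas]
    constructor
    · filter_upwards [ae_restrict_mem measurableSet_Ioc] with t ht
      have : Integrable (fun s : ℝ => Real.exp (-(s * t))) ν := by
        have := exp_neg_integrableOn_Ioi 0 ht.1
        simpa [mul_comm, IntegrableOn] using this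
      simpa using this.mul_const (Real.sin t)
    · apply Integrable.mono' (integrable_const (1:ℝ))
      · exact hmeas.norm.integral_prod_right'
      · filter_upwards [ae_restrict_mem measurableSet_Ioc] with t ht
        have h1 : ∫ s, ‖Real.exp (-(s * t)) * Real.sin t‖ ∂ν
            = |Real.sin t| * (1/t) := by
          have : ∀ s : ℝ, ‖Real.exp (-(s * t)) * Real.sin t‖
              = Real.exp (-(s * t)) * |Real.sin t| := by
            intro s
            rw [norm_mul, Real.norm_eq_abs, Real.norm_eq_abs, abs_of_pos (Real.exp_pos _)]
          simp only [this]
          rw [MeasureTheory.integral_mul_const, aux_integral_exp_Ioi ht.1, mul_comm]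
        rw [Real.norm_eq_abs, abs_of_nonneg (integral_nonneg fun s => norm_nonneg _), h1]
        calc |Real.sin t| * (1/t) ≤ |t| * (1/t) :=
              mul_le_mul_of_nonneg_right Real.abs_sin_le_abs
                (le_of_lt (by rw [one_div]; exact inv_pos.mpr ht.1))
          _ = 1 := by
              rw [abs_of_pos ht.1]
              exact mul_one_div_cancel (ne_of_gt ht.1)
    all_goals infer_instance
  have swap := MeasureTheory.integral_integral_swap
    (f := fun t s => Real.exp (-(s * t)) * Real.sin t) (μ := μ) (ν := ν) hInt
  have lhs_eq : ∫ t, (∫ s, Real.exp (-(s * t)) * Real.sin t ∂ν) ∂μ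
      = ∫ t in (0:ℝ)..R, Real.sin t / t := by
    rw [intervalIntegral.integral_of_le hR.le]
    apply MeasureTheory.setIntegral_congr_fun measurableSet_Ioc
    intro t ht
    simp only
    rw [MeasureTheory.integral_mul_const, aux_integral_exp_Ioi ht.1]
    ring
  have rhs_eq : ∫ s, (∫ t, Real.exp (-(s * t)) * Real.sin t ∂μ) ∂ν
      = ∫ s in Ioi (0:ℝ), (1 - Real.exp (-(s*R)) * (s * Real.sin R + Real.cos R)) / (1 + s^2) := by
    apply MeasureTheory.setIntegral_congr_fun measurableSet_Ioi
    intro s _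
    simp only
    rw [show (∫ t, Real.exp (-(s * t)) * Real.sin t ∂μ)
        = ∫ t in (0:ℝ)..R, Real.exp (-(s*t)) * Real.sin t by
      rw [intervalIntegral.integral_of_le hR.le]]
    exact aux_integral_exp_mul_sin s R
  rw [← lhs_eq, swap, rhs_eq]




/-- The Dirichlet integral: ∫₀^R sin t / t → π/2. -/
lemma aux_dirichlet_limit :
    Tendsto (fun R => ∫ t in (0:ℝ)..R, Real.sin t / t) atTop (𝓝 (π/2)) := by
  have hbound : ∀ (R s : ℝ), 0 < R → s ∈ Ioi (0:ℝ) →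
      ‖Real.exp (-(s*R)) * (s * Real.sin R + Real.cos R) / (1 + s^2)‖
        ≤ 2 * Real.exp (-(s*R)) := by
    intro R s hR hs
    have h1 : (0:ℝ) < 1 + s^2 := by positivity
    rw [norm_div, norm_mul, Real.norm_eq_abs, Real.norm_eq_abs, Real.norm_eq_abs,
      abs_of_pos (Real.exp_pos _), abs_of_pos h1]
    rw [div_le_iff₀ h1]
    have h2 : |s * Real.sin R + Real.cos R| ≤ s + 1 := by
      calc |s * Real.sin R + Real.cos R| ≤ |s * Real.sin R| + |Real.cos R| := abs_add_le _ _
        _ ≤ s * 1 + 1 := by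
            apply add_le_add
            · rw [abs_mul, abs_of_pos hs]
              exact mul_le_mul_of_nonneg_left (Real.abs_sin_le_one R) hs.le
            · exact Real.abs_cos_le_one R
        _ = s + 1 := by ring
    calc Real.exp (-(s*R)) * |s * Real.sin R + Real.cos R|
        ≤ Real.exp (-(s*R)) * (s + 1) :=
          mul_le_mul_of_nonneg_left h2 (Real.exp_pos _).le
      _ ≤ 2 * Real.exp (-(s*R)) * (1 + s^2) := by
          nlinarith [Real.exp_pos (-(s*R)), sq_nonneg (s-1), sq_nonneg s]
  have hIntE : ∀ R : ℝ, 0 < R → IntegrableOn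
      (fun s => Real.exp (-(s*R)) * (s * Real.sin R + Real.cos R) / (1 + s^2)) (Ioi (0:ℝ)) := by
    intro R hR
    have hg : IntegrableOn (fun s => 2 * Real.exp (-(s*R))) (Ioi (0:ℝ)) := by
      exact IntegrableOn.congr_fun ((exp_neg_integrableOn_Ioi 0 hR).const_mul 2)
        (fun s _ => by simp [mul_comm]) measurableSet_Ioi
    apply Integrable.mono' hg
    · apply Continuous.aestronglyMeasurable
      have : Continuous fun s : ℝ => (1:ℝ) + s^2 := by continuity
      apply Continuous.div (by continuity) this
      intro s; positivity
    · filter_upwards [ae_restrict_mem measurableSet_Ioi] with s hs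
      exact hbound R s hR hs
  have hsplit : ∀ R : ℝ, 0 < R →
      (∫ s in Ioi (0:ℝ), (1 - Real.exp (-(s*R)) * (s * Real.sin R + Real.cos R)) / (1 + s^2))
      = π/2 - ∫ s in Ioi (0:ℝ),
          Real.exp (-(s*R)) * (s * Real.sin R + Real.cos R) / (1 + s^2) := by
    intro R hR
    have h1 : IntegrableOn (fun s : ℝ => (1 + s^2)⁻¹) (Ioi (0:ℝ)) :=
      integrable_inv_one_add_sq.integrableOn
    have : ∀ s : ℝ, (1 - Real.exp (-(s*R)) * (s * Real.sin R + Real.cos R)) / (1 + s^2)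
        = (1 + s^2)⁻¹ - Real.exp (-(s*R)) * (s * Real.sin R + Real.cos R) / (1 + s^2) := by
      intro s
      rw [sub_div, one_div] -- check
    rw [MeasureTheory.setIntegral_congr_fun measurableSet_Ioi (fun s _ => this s)]
    rw [MeasureTheory.integral_sub h1 (hIntE R hR)]
    rw [integral_Ioi_inv_one_add_sq, Real.arctan_zero, sub_zero]
  have hE0 : Tendsto (fun R => ∫ s in Ioi (0:ℝ),
      Real.exp (-(s*R)) * (s * Real.sin R + Real.cos R) / (1 + s^2)) atTop (𝓝 0) := by
    apply squeeze_zero_norm' (a := fun R : ℝ => 2 * (1/R))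
    · filter_upwards [eventually_gt_atTop (0:ℝ)] with R hR
      calc ‖∫ s in Ioi (0:ℝ), Real.exp (-(s*R)) * (s * Real.sin R + Real.cos R) / (1 + s^2)‖
          ≤ ∫ s in Ioi (0:ℝ), 2 * Real.exp (-(s*R)) := by
            apply MeasureTheory.norm_integral_le_of_norm_le
            · exact IntegrableOn.congr_fun ((exp_neg_integrableOn_Ioi 0 hR).const_mul 2)
                (fun s _ => by simp [mul_comm]) measurableSet_Ioi
            · filter_upwards [ae_restrict_mem measurableSet_Ioi] with s hs
              exact hbound R s hR hs
        _ = 2 * (1/R) := by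
            rw [MeasureTheory.integral_const_mul, aux_integral_exp_Ioi hR]
    · have h := tendsto_inv_atTop_zero (𝕜 := ℝ)
      simpa [one_div] using h.const_mul (2:ℝ)
  have : Tendsto (fun R => π/2 - ∫ s in Ioi (0:ℝ),
      Real.exp (-(s*R)) * (s * Real.sin R + Real.cos R) / (1 + s^2)) atTop (𝓝 (π/2)) := by
    simpa using (tendsto_const_nhds (x := π/2)).sub hE0
  apply this.congr'
  filter_upwards [eventually_gt_atTop (0:ℝ)] with R hR
  rw [aux_dirichlet_trunc hR, hsplit R hR]



/-- sin t / t is interval integrable on any interval. -/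
lemma aux_sinc_intervalIntegrable (a b : ℝ) :
    IntervalIntegrable (fun t => Real.sin t / t) volume a b := by
  rw [intervalIntegrable_iff]
  apply Integrable.mono' (integrableOn_const (C := (1:ℝ)) measure_Ioc_lt_top.ne)
  · exact (Real.measurable_sin.div measurable_id).aestronglyMeasurable
  · refine Filter.Eventually.of_forall fun t => ?_
    rw [Real.norm_eq_abs, abs_div]
    rcases eq_or_ne t 0 with rfl | ht
    · simp
    · rw [div_le_one (abs_pos.mpr ht)]
      exact Real.abs_sin_le_abs

lemma aux_sinc_small : Tendsto (fun ε : ℝ => ∫ t in (0:ℝ)..ε, Real.sin t / t) (𝓝[>] 0) (𝓝 0) := by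
  apply squeeze_zero_norm (a := fun ε : ℝ => |ε|)
  · intro ε
    have := intervalIntegral.norm_integral_le_of_norm_le_const
      (C := 1) (f := fun t => Real.sin t / t) (a := 0) (b := ε) ?_
    · simpa using this
    · intro x _
      rw [Real.norm_eq_abs, abs_div]
      rcases eq_or_ne x 0 with rfl | hx
      · simp
      · rw [div_le_one (abs_pos.mpr hx)]
        exact Real.abs_sin_le_abs
  · have : Tendsto (fun ε : ℝ => |ε|) (𝓝 0) (𝓝 |0|) := continuous_abs.tendsto 0
    simpa using this.mono_left nhdsWithin_le_nhds

lemma aux_sinc_two_sided :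
    Tendsto (fun p : ℝ × ℝ => ∫ t in p.2..p.1, Real.sin t / t) (atTop ×ˢ 𝓝[>] (0:ℝ))
      (𝓝 (π/2)) := by
  have key : ∀ p : ℝ × ℝ, (∫ t in p.2..p.1, Real.sin t / t)
      = (∫ t in (0:ℝ)..p.1, Real.sin t / t) - ∫ t in (0:ℝ)..p.2, Real.sin t / t := by
    intro p
    have h := intervalIntegral.integral_add_adjacent_intervals
      (aux_sinc_intervalIntegrable 0 p.2) (aux_sinc_intervalIntegrable p.2 p.1)
    linarith
  simp only [key]
  have h1 := aux_dirichlet_limit.comp (tendsto_fst (f := (atTop : Filter ℝ)) (g := 𝓝[>] (0:ℝ)))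
  have h2 := aux_sinc_small.comp (tendsto_snd (f := (atTop : Filter ℝ)) (g := 𝓝[>] (0:ℝ)))
  simpa using h1.sub h2

theorem hilbert_transform_cos (w : ℝ) :
    Tendsto
      (fun p : ℝ × ℝ =>
        (1 / Real.pi) *
          ((∫ x in (w - p.1)..(w - p.2), Real.cos x / (w - x)) +
            ∫ x in (w + p.2)..(w + p.1), Real.cos x / (w - x)))
      (atTop ×ˢ 𝓝[>] 0) (𝓝 (Real.sin w)) := by
  have hπ : (π : ℝ) ≠ 0 := Real.pi_ne_zero
  have hmain : Tendsto (fun p : ℝ × ℝ =>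
      (2 * Real.sin w / π) * ∫ t in p.2..p.1, Real.sin t / t)
      (atTop ×ˢ 𝓝[>] (0:ℝ)) (𝓝 (Real.sin w)) := by
    have := aux_sinc_two_sided.const_mul (2 * Real.sin w / π)
    have harith : 2 * Real.sin w / π * (π/2) = Real.sin w := by field_simp
    rwa [harith] at this
  apply hmain.congr'
  filter_upwards [(eventually_gt_atTop (0:ℝ)).prod_mk
    (self_mem_nhdsWithin : {x : ℝ | 0 < x} ∈ 𝓝[>] (0:ℝ))] with p hp
  obtain ⟨hR, hε⟩ := hp
  set R := p.1
  set ε := p.2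
  -- substitution in first integral
  have hA : (∫ x in (w - R)..(w - ε), Real.cos x / (w - x))
      = ∫ t in ε..R, Real.cos (w - t) / t := by
    rw [← intervalIntegral.integral_comp_sub_left (fun x => Real.cos x / (w - x)) w]
    congr 1
    ext t
    rw [sub_sub_cancel]
  have hB : (∫ x in (w + ε)..(w + R), Real.cos x / (w - x))
      = ∫ t in ε..R, -(Real.cos (w + t) / t) := by
    rw [← intervalIntegral.integral_comp_add_left (fun x => Real.cos x / (w - x)) w]
    congr 1
    ext t
    rw [show w - (w + t) = -t by ring, div_neg]
  -- integrability of the two pieces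
  have hpos : ∀ t ∈ Set.uIcc ε R, t ≠ 0 := by
    intro t ht
    rcases Set.mem_uIcc.mp ht with h | h
    · exact ne_of_gt (lt_of_lt_of_le hε h.1)
    · exact ne_of_gt (lt_of_lt_of_le hR h.1)
  have hi1 : IntervalIntegrable (fun t => Real.cos (w - t) / t) volume ε R := by
    apply ContinuousOn.intervalIntegrable
    exact ((Real.continuous_cos.comp (continuous_const.sub continuous_id)).continuousOn).div
      continuousOn_id hpos
  have hi2 : IntervalIntegrable (fun t => -(Real.cos (w + t) / t)) volume ε R := by
    apply ContinuousOn.intervalIntegrable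
    exact (((Real.continuous_cos.comp (continuous_const.add continuous_id)).continuousOn).div
      continuousOn_id hpos).neg
  have hsum : (∫ t in ε..R, Real.cos (w - t) / t) + (∫ t in ε..R, -(Real.cos (w + t) / t))
      = ∫ t in ε..R, 2 * Real.sin w * (Real.sin t / t) := by
    rw [← intervalIntegral.integral_add hi1 hi2]
    apply intervalIntegral.integral_congr
    intro t _
    have hc : Real.cos (w - t) - Real.cos (w + t) = 2 * Real.sin w * Real.sin t := by
      rw [Real.cos_sub_cos]
      rw [show (w - t + (w + t)) / 2 = w by ring, show (w - t - (w + t)) / 2 = -t by ring,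
        Real.sin_neg]
      ring
    calc Real.cos (w - t) / t + -(Real.cos (w + t) / t)
        = (Real.cos (w - t) - Real.cos (w + t)) / t := by ring
      _ = 2 * Real.sin w * Real.sin t / t := by rw [hc]
      _ = 2 * Real.sin w * (Real.sin t / t) := by ring
  show 2 * Real.sin w / π * _ = _
  rw [hA, hB, hsum, intervalIntegral.integral_const_mul]
  ring
end
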